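/- Under the separation condition, hierarchical agglomerative clustering with complete linkage recovers the true groups: starting from singletons and merging at each step the pair of clusters with minimal complete-linkage dissimilarity, after n - N merge steps the resulting partition equals {G_1,...,G_N}. -/
import Mathlib


/-- Complete linkage dissimilarity between two sets of indices. -/
noncomputable def completeLinkage (n : ℕ) (d : Fin n → Fin n → ℝ)
    (S S' : Finset (Fin n)) : ℝ :=
  sSup {x : ℝ | ∃ i ∈ S, ∃ j ∈ S', x = d i j}

/-- One step of hierarchical agglomerative clustering with complete linkage:
`Q` is obtained from `P` by merging a pair of distinct clusters minimizing
the complete-linkage dissimilarity. -/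
noncomputable def hacStep (n : ℕ) (d : Fin n → Fin n → ℝ)
    (P Q : Finset (Finset (Fin n))) : Prop :=
  ∃ A ∈ P, ∃ B ∈ P, A ≠ B ∧
    (∀ A' ∈ P, ∀ B' ∈ P, A' ≠ B' →
      completeLinkage n d A B ≤ completeLinkage n d A' B') ∧
    Q = insert (A ∪ B) ((P.erase A).erase B)

namespace HACaux

variable {n N : ℕ} {d : Fin n → Fin n → ℝ} {G : Fin N → Finset (Fin n)}

lemma cl_set_eq (S S' : Finset (Fin n)) :
    {x : ℝ | ∃ i ∈ S, ∃ j ∈ S', x = d i j}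
      = ↑((S ×ˢ S').image fun p => d p.1 p.2) := by
  ext x
  simp only [Set.mem_setOf_eq, Finset.coe_image, Set.mem_image, Finset.mem_coe,
    Finset.mem_product]
  constructor
  · rintro ⟨i, hi, j, hj, rfl⟩; exact ⟨(i, j), ⟨hi, hj⟩, rfl⟩
  · rintro ⟨⟨i, j⟩, ⟨hi, hj⟩, rfl⟩; exact ⟨i, hi, j, hj, rfl⟩

lemma cl_mem {S S' : Finset (Fin n)} (hS : S.Nonempty) (hS' : S'.Nonempty) :
    ∃ i ∈ S, ∃ j ∈ S', completeLinkage n d S S' = d i j := by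
  have hfin : {x : ℝ | ∃ i ∈ S, ∃ j ∈ S', x = d i j}.Finite := by
    rw [cl_set_eq]; exact Finset.finite_toSet _
  obtain ⟨i, hi⟩ := hS; obtain ⟨j, hj⟩ := hS'
  have hne : {x : ℝ | ∃ i ∈ S, ∃ j ∈ S', x = d i j}.Nonempty :=
    ⟨d i j, i, hi, j, hj, rfl⟩
  exact hne.csSup_mem hfin

lemma le_cl {S S' : Finset (Fin n)} {i j : Fin n} (hi : i ∈ S) (hj : j ∈ S') :
    d i j ≤ completeLinkage n d S S' := by
  have hfin : {x : ℝ | ∃ i ∈ S, ∃ j ∈ S', x = d i j}.Finite := by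
    rw [cl_set_eq]; exact Finset.finite_toSet _
  exact le_csSup hfin.bddAbove ⟨i, hi, j, hj, rfl⟩

/-- within-group linkage is strictly less than cross-group linkage -/
lemma cl_lt
    (hsep : ∀ k : Fin N, ∀ i ∈ G k, ∀ j ∈ G k, ∀ k₁ k₂ : Fin N, k₁ ≠ k₂ →
      ∀ i' ∈ G k₁, ∀ j' ∈ G k₂, d i j < d i' j')
    {A B A' B' : Finset (Fin n)} {k k₁ k₂ : Fin N}
    (hA : A ⊆ G k) (hB : B ⊆ G k) (hAne : A.Nonempty) (hBne : B.Nonempty)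
    (hk : k₁ ≠ k₂) (hA' : A' ⊆ G k₁) (hB' : B' ⊆ G k₂)
    (hA'ne : A'.Nonempty) (hB'ne : B'.Nonempty) :
    completeLinkage n d A B < completeLinkage n d A' B' := by
  obtain ⟨i, hi, j, hj, hEq⟩ := cl_mem (d := d) hAne hBne
  obtain ⟨i', hi'⟩ := hA'ne; obtain ⟨j', hj'⟩ := hB'ne
  calc completeLinkage n d A B = d i j := hEq
    _ < d i' j' := hsep k i (hA hi) j (hB hj) k₁ k₂ hk i' (hA' hi') j' (hB' hj')
    _ ≤ completeLinkage n d A' B' := le_cl hi' hj'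

/-- invariant -/
def Good (G : Fin N → Finset (Fin n)) (Q : Finset (Finset (Fin n))) : Prop :=
  (∀ A ∈ Q, A.Nonempty) ∧
  (∀ A ∈ Q, ∀ B ∈ Q, A ≠ B → Disjoint A B) ∧
  (∀ i : Fin n, ∃ A ∈ Q, i ∈ A) ∧
  (∀ A ∈ Q, ∃ k, A ⊆ G k)

lemma step
    (hdisj : ∀ k k', k ≠ k' → Disjoint (G k) (G k'))
    (hsep : ∀ k : Fin N, ∀ i ∈ G k, ∀ j ∈ G k, ∀ k₁ k₂ : Fin N, k₁ ≠ k₂ →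
      ∀ i' ∈ G k₁, ∀ j' ∈ G k₂, d i j < d i' j')
    {Q Q' : Finset (Finset (Fin n))}
    (hQ : Good G Q) (hcard : N < Q.card) (hs : hacStep n d Q Q') :
    Good G Q' ∧ Q'.card = Q.card - 1 := by
  obtain ⟨hne, hdj, hcov, hsub⟩ := hQ
  obtain ⟨A, hAQ, B, hBQ, hAB, hmin, rfl⟩ := hs
  -- choose group for each cluster
  choose κ hκ using fun (X : Finset (Fin n)) (h : X ∈ Q) => hsub X h
  -- there exist two distinct clusters in the same group
  have hpig : ∃ C ∈ Q, ∃ C' ∈ Q, C ≠ C' ∧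
      ∃ k, C ⊆ G k ∧ C' ⊆ G k := by
    have hlt : (Finset.univ : Finset (Fin N)).card < Q.attach.card := by
      simpa using hcard
    obtain ⟨C, _, C', _, hne', hEq⟩ :=
      Finset.exists_ne_map_eq_of_card_lt_of_maps_to hlt
        (f := fun (C : {x // x ∈ Q}) => κ C.1 C.2)
        (fun C _ => Finset.mem_univ _)
    refine ⟨C.1, C.2, C'.1, C'.2, ?_, κ C.1 C.2, hκ C.1 C.2, hEq ▸ hκ C'.1 C'.2⟩
    exact fun h => hne' (Subtype.ext h)
  obtain ⟨C, hCQ, C', hC'Q, hCC', k₀, hCk, hC'k⟩ := hpig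
  -- A and B lie in the same group
  have hsame : ∃ k, A ⊆ G k ∧ B ⊆ G k := by
    obtain ⟨kA, hkA⟩ := hsub A hAQ
    obtain ⟨kB, hkB⟩ := hsub B hBQ
    rcases eq_or_ne kA kB with rfl | hkk
    · exact ⟨kA, hkA, hkB⟩
    · exfalso
      have h1 := hmin C hCQ C' hC'Q hCC'
      have h2 := cl_lt hsep hCk hC'k (hne C hCQ) (hne C' hC'Q) hkk hkA hkB
        (hne A hAQ) (hne B hBQ)
      linarith
  obtain ⟨k, hAk, hBk⟩ := hsame
  have hmem : ∀ X, X ∈ insert (A ∪ B) ((Q.erase A).erase B) ↔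
      X = A ∪ B ∨ (X ∈ Q ∧ X ≠ A ∧ X ≠ B) := by
    intro X
    simp only [Finset.mem_insert, Finset.mem_erase]
    tauto
  have hABne : (A ∪ B).Nonempty := (hne A hAQ).mono Finset.subset_union_left
  constructor
  · refine ⟨?_, ?_, ?_, ?_⟩
    · intro X hX
      rcases (hmem X).1 hX with rfl | ⟨hXQ, _, _⟩
      · exact hABne
      · exact hne X hXQ
    · intro X hX Y hY hXY
      rcases (hmem X).1 hX with rfl | ⟨hXQ, hXA, hXB⟩ <;>
        rcases (hmem Y).1 hY with rfl | ⟨hYQ, hYA, hYB⟩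
      · exact absurd rfl hXY
      · exact Finset.disjoint_union_left.2
          ⟨hdj A hAQ Y hYQ (Ne.symm hYA), hdj B hBQ Y hYQ (Ne.symm hYB)⟩
      · exact Finset.disjoint_union_right.2
          ⟨hdj X hXQ A hAQ hXA, hdj X hXQ B hBQ hXB⟩
      · exact hdj X hXQ Y hYQ hXY
    · intro i
      obtain ⟨X, hXQ, hiX⟩ := hcov i
      rcases eq_or_ne X A with hXA | hXA
      · exact ⟨A ∪ B, (hmem _).2 (Or.inl rfl),
          Finset.mem_union_left _ (hXA ▸ hiX)⟩
      rcases eq_or_ne X B with hXB | hXB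
      · exact ⟨A ∪ B, (hmem _).2 (Or.inl rfl),
          Finset.mem_union_right _ (hXB ▸ hiX)⟩
      · exact ⟨X, (hmem _).2 (Or.inr ⟨hXQ, hXA, hXB⟩), hiX⟩
    · intro X hX
      rcases (hmem X).1 hX with rfl | ⟨hXQ, _, _⟩
      · exact ⟨k, Finset.union_subset hAk hBk⟩
      · exact hsub X hXQ
  · have hnotin : A ∪ B ∉ (Q.erase A).erase B := by
      intro h
      obtain ⟨hB', hrest⟩ := Finset.mem_erase.1 h
      obtain ⟨hA', hQ'⟩ := Finset.mem_erase.1 hrest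
      have := hdj (A ∪ B) hQ' A hAQ hA'
      have hAsub : A ⊆ A ∪ B := Finset.subset_union_left
      obtain ⟨a, ha⟩ := hne A hAQ
      exact (Finset.disjoint_left.1 this (hAsub ha)) ha
    rw [Finset.card_insert_of_notMem hnotin,
      Finset.card_erase_of_mem (Finset.mem_erase.2 ⟨Ne.symm hAB, hBQ⟩),
      Finset.card_erase_of_mem hAQ]
    have : 2 ≤ Q.card := Finset.one_lt_card.2 ⟨A, hAQ, B, hBQ, hAB⟩
    omega

end HACaux

namespace HACaux2
open HACaux

variable {n N : ℕ} {d : Fin n → Fin n → ℝ} {G : Fin N → Finset (Fin n)}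

lemma final
    (hGne : ∀ k, (G k).Nonempty)
    (hdisj : ∀ k k', k ≠ k' → Disjoint (G k) (G k'))
    {Q : Finset (Finset (Fin n))}
    (hQ : Good G Q) (hcard : Q.card = N) :
    Q = Finset.univ.image G := by
  obtain ⟨hne, hdj, hcov, hsub⟩ := hQ
  -- a cluster meeting a group is contained in it
  have hkey : ∀ X ∈ Q, ∀ k, ∀ x, x ∈ X → x ∈ G k → X ⊆ G k := by
    intro X hXQ k x hxX hxG
    obtain ⟨k', hk'⟩ := hsub X hXQ
    rcases eq_or_ne k' k with rfl | hkk
    · exact hk'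
    · exact absurd hxG (Finset.disjoint_left.1 (hdisj k' k hkk) (hk' hxX))
  choose x hx using hGne
  choose A hAQ hAx using fun k => hcov (x k)
  have hAsub : ∀ k, A k ⊆ G k := fun k => hkey (A k) (hAQ k) k (x k) (hAx k) (hx k)
  have hAinj : Function.Injective A := by
    intro k k' hEq
    by_contra hkk
    have h1 : x k' ∈ G k := hAsub k (hEq ▸ hAx k')
    exact (Finset.disjoint_left.1 (hdisj k k' hkk) h1) (hx k')
  have himg : Finset.univ.image A = Q := by
    apply Finset.eq_of_subset_of_card_le
    · intro X hX
      obtain ⟨k, _, rfl⟩ := Finset.mem_image.1 hX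
      exact hAQ k
    · rw [Finset.card_image_of_injective _ hAinj, Finset.card_univ,
        Fintype.card_fin, hcard]
  have hAeq : ∀ k, A k = G k := by
    intro k
    apply Finset.Subset.antisymm (hAsub k)
    intro y hy
    obtain ⟨B, hBQ, hyB⟩ := hcov y
    have hBsub : B ⊆ G k := hkey B hBQ k y hyB hy
    obtain ⟨k', _, hBA⟩ := Finset.mem_image.1 (himg ▸ hBQ)
    have hk'k : k' = k := by
      by_contra hkk
      obtain ⟨b, hb⟩ := hne B hBQ
      have h1 : b ∈ G k' := (hBA ▸ hAsub k') hb
      exact (Finset.disjoint_left.1 (hdisj k' k hkk) h1) (hBsub hb)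
    have hAB : A k = B := hk'k ▸ hBA
    rw [hAB]; exact hyB
  rw [← himg]
  exact Finset.image_congr (fun k _ => hAeq k)

end HACaux2

theorem hac_recovers_groups (n N : ℕ) (d : Fin n → Fin n → ℝ)
    (hsym : ∀ i j, d i j = d j i)
    (G : Fin N → Finset (Fin n))
    (hGne : ∀ k, (G k).Nonempty)
    (hdisj : ∀ k k', k ≠ k' → Disjoint (G k) (G k'))
    (hcover : ∀ i : Fin n, ∃ k, i ∈ G k)
    (hsep : ∀ k : Fin N, ∀ i ∈ G k, ∀ j ∈ G k, ∀ k₁ k₂ : Fin N, k₁ ≠ k₂ →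
      ∀ i' ∈ G k₁, ∀ j' ∈ G k₂, d i j < d i' j')
    (P : ℕ → Finset (Finset (Fin n)))
    (hP0 : P 0 = Finset.univ.image (fun i : Fin n => ({i} : Finset (Fin n))))
    (hstep : ∀ r < n - N, hacStep n d (P r) (P (r + 1))) :
    P (n - N) = Finset.univ.image G := by
  classical
  -- N ≤ n
  have hNn : N ≤ n := by
    choose x hx using hGne
    have hinj : Function.Injective x := by
      intro k k' hEq
      by_contra hkk
      exact (Finset.disjoint_left.1 (hdisj k k' hkk) (hx k)) (hEq ▸ hx k')
    simpa using Fintype.card_le_of_injective x hinj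
  -- base case
  have hbase : HACaux.Good G (P 0) ∧ (P 0).card = n := by
    constructor
    · refine ⟨?_, ?_, ?_, ?_⟩
      · intro A hA
        rw [hP0] at hA
        obtain ⟨i, _, rfl⟩ := Finset.mem_image.1 hA
        exact Finset.singleton_nonempty i
      · intro A hA B hB hAB
        rw [hP0] at hA hB
        obtain ⟨i, _, rfl⟩ := Finset.mem_image.1 hA
        obtain ⟨j, _, rfl⟩ := Finset.mem_image.1 hB
        simp only [Finset.disjoint_singleton_left, Finset.mem_singleton]
        intro h; exact hAB (h ▸ rfl)
      · intro i
        exact ⟨{i}, hP0 ▸ Finset.mem_image.2 ⟨i, Finset.mem_univ _, rfl⟩,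
          Finset.mem_singleton_self i⟩
      · intro A hA
        rw [hP0] at hA
        obtain ⟨i, _, rfl⟩ := Finset.mem_image.1 hA
        obtain ⟨k, hk⟩ := hcover i
        exact ⟨k, Finset.singleton_subset_iff.2 hk⟩
    · rw [hP0, Finset.card_image_of_injective _ (fun i j h => by
        simpa using h), Finset.card_univ, Fintype.card_fin]
  -- induction
  have hind : ∀ r, r ≤ n - N → HACaux.Good G (P r) ∧ (P r).card = n - r := by
    intro r
    induction r with
    | zero => intro _; simpa using hbase
    | succ r ih =>
      intro hr
      have hr' : r < n - N := by omega
      obtain ⟨hgood, hcard⟩ := ih (le_of_lt hr')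
      have hNlt : N < (P r).card := by omega
      obtain ⟨hgood', hcard'⟩ :=
        HACaux.step hdisj hsep hgood hNlt (hstep r hr')
      exact ⟨hgood', by omega⟩
  obtain ⟨hgood, hcard⟩ := hind (n - N) le_rfl
  exact HACaux2.final hGne hdisj hgood (by omega)
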